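/- Let d ≥ 3 and suppose char K ≠ 2, θ_i = η + μ(i − d/2) + hi(d−i), θ*_i = η* + μ*(i − d/2) + h*i(d−i) for 0 ≤ i ≤ d with the θ_i pairwise distinct and θ*_i pairwise distinct, and φ_i = i(d−i+1)(τ − μμ*/2 + (hμ* + μh*)(i − (d+1)/2) + hh*(i−1)(d−i)) all nonzero for 1 ≤ i ≤ d. Define a_0 = θ_0 + φ_1/(θ*_0 − θ*_1), a_d = θ_d + φ_d/(θ*_d − θ*_{d−1}), and H = (a_0 − a_d)(θ*_0 − θ*_1)(θ*_{d−1} − θ*_d)/(θ*_0 − θ*_d). Then H = 2τ + hh*(d−1)^2. -/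

import Mathlib

private lemma stmt_12_aux {K : Type*} [Field K] (a b p q A B : K)
    (hA : A ≠ 0) (hB : B ≠ 0) :
    (a + p / A - (b + q / B)) * A * (-B) = (b - a) * A * B - p * B + q * A := by
  field_simp
  ring

set_option maxHeartbeats 1000000 in
theorem stmt_12 {K : Type*} [Field K] (d : ℕ) (hd : 3 ≤ d)
    (hchar : (2 : K) ≠ 0)
    (η μ h ηs μs hs τ : K)
    (θ θs φ : ℕ → K)
    (hθ : ∀ i, i ≤ d →
      θ i = η + μ * ((i : K) - (d : K) / 2) + h * (i : K) * ((d : K) - (i : K)))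
    (hθs : ∀ i, i ≤ d →
      θs i = ηs + μs * ((i : K) - (d : K) / 2) + hs * (i : K) * ((d : K) - (i : K)))
    (hφ : ∀ i, 1 ≤ i → i ≤ d →
      φ i = (i : K) * ((d : K) - (i : K) + 1)
        * (τ - μ * μs / 2 + (h * μs + μ * hs) * ((i : K) - ((d : K) + 1) / 2)
            + h * hs * ((i : K) - 1) * ((d : K) - (i : K))))
    (hθinj : ∀ i j, i ≤ d → j ≤ d → i ≠ j → θ i ≠ θ j)
    (hθsinj : ∀ i j, i ≤ d → j ≤ d → i ≠ j → θs i ≠ θs j)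
    (hφne : ∀ i, 1 ≤ i → i ≤ d → φ i ≠ 0) :
    ((θ 0 + φ 1 / (θs 0 - θs 1)) - (θ d + φ d / (θs d - θs (d - 1))))
        * (θs 0 - θs 1) * (θs (d - 1) - θs d) / (θs 0 - θs d)
      = 2 * τ + h * hs * ((d : K) - 1) ^ 2 := by
  have hd1 : (1 : ℕ) ≤ d := by omega
  have hcast : ((d - 1 : ℕ) : K) = (d : K) - 1 := by push_cast [hd1]; ring
  have ne1 : θs 0 - θs 1 ≠ 0 :=
    sub_ne_zero.mpr (hθsinj 0 1 (by omega) (by omega) (by omega))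
  have ne2 : θs d - θs (d - 1) ≠ 0 :=
    sub_ne_zero.mpr (hθsinj d (d - 1) le_rfl (by omega) (by omega))
  have ne3 : θs 0 - θs d ≠ 0 :=
    sub_ne_zero.mpr (hθsinj 0 d (by omega) le_rfl (by omega))
  have hC' : θs (d - 1) - θs d = -(θs d - θs (d - 1)) := by ring
  have key := stmt_12_aux (θ 0) (θ d) (φ 1) (φ d) (θs 0 - θs 1)
    (θs d - θs (d - 1)) ne1 ne2
  rw [div_eq_iff ne3, hC', key]
  rw [hθ 0 (by omega), hθ d le_rfl, hθs 0 (by omega), hθs 1 (by omega),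
    hθs (d - 1) (by omega), hθs d le_rfl, hφ 1 (by omega) (by omega),
    hφ d (by omega) le_rfl, hcast]
  push_cast
  have h128 : (128 : K) ≠ 0 := by
    have h := pow_ne_zero 7 hchar
    norm_num at h
    exact h
  field_simp
  have hc : (128 : K) * (128 : K)⁻¹ = 1 := mul_inv_cancel₀ h128
  ring
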